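/- In a finite-horizon MDP, every policy has an unreachable state-epoch pair if and only if there exist a state s and an epoch t ∈ {2,...,T} such that p_{t-1}(s|s',a') = 0 for every state s' and every action a' ∈ A_{s'}. -/
import Mathlib


open Finset

/-- A finite-horizon MDP with `N` states, horizon `T` (epochs `0,…,T-1`, so `T ≥ 2` has at
least one decision epoch), action sets `Fin (k s)` for each state `s`, and transition
probabilities `p t s a j = p_t(j | s, a)` governing the move from epoch `t` to `t+1`,
together with a strictly positive initial distribution `α`. -/
structure MDP (N T : ℕ) (k : Fin N → ℕ) : Type where
  p : ℕ → (s : Fin N) → Fin (k s) → Fin N → ℝ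
  α : Fin N → ℝ
  p_nonneg : ∀ t s a j, 0 ≤ p t s a j
  p_sum : ∀ t s a, ∑ j, p t s a j = 1
  α_pos : ∀ s, 0 < α s
  α_sum : ∑ s, α s = 1

/-- A (randomized, Markov, non-stationary) policy: `q t s a` is the probability that
action `a` is chosen in state `s` at decision epoch `t`. -/
structure Policy (N : ℕ) (k : Fin N → ℕ) : Type where
  q : ℕ → (s : Fin N) → Fin (k s) → ℝ
  q_nonneg : ∀ t s a, 0 ≤ q t s a
  q_sum : ∀ t s, ∑ a, q t s a = 1

variable {N T : ℕ} {k : Fin N → ℕ}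

/-- `condProb M π j t s` is `P^π(S_t = s | S_0 = j)` (epochs indexed from 0). -/
def condProb (M : MDP N T k) (π : Policy N k) (j : Fin N) : ℕ → Fin N → ℝ
  | 0, s => if s = j then 1 else 0
  | t+1, s => ∑ s', ∑ a, condProb M π j t s' * π.q t s' a * M.p t s' a s

/-- The state-action frequency `x_{π,t}(s,a) = ∑_j α(j) P^π(S_t = s, A_t = a | S_0 = j)`
(epochs indexed from 0, so the decision epochs are `0,…,T-2`). -/
def xsa (M : MDP N T k) (π : Policy N k) (t : ℕ) (s : Fin N) (a : Fin (k s)) : ℝ :=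
  ∑ j, M.α j * condProb M π j t s * π.q t s a

/-- The terminal state frequency `x_{π,T}(s)` (terminal epoch is `T-1` in 0-based indexing). -/
def xT (M : MDP N T k) (π : Policy N k) (s : Fin N) : ℝ :=
  ∑ j, M.α j * condProb M π j (T-1) s

lemma condProb_nonneg (M : MDP N T k) (π : Policy N k) (j : Fin N) :
    ∀ t s, 0 ≤ condProb M π j t s
  | 0, s => by dsimp [condProb]; split <;> norm_num
  | t+1, s => by
    rw [show condProb M π j (t+1) s
        = ∑ s', ∑ a, condProb M π j t s' * π.q t s' a * M.p t s' a s from rfl]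
    apply Finset.sum_nonneg; intro s' _
    apply Finset.sum_nonneg; intro a _
    exact mul_nonneg (mul_nonneg (condProb_nonneg M π j t s') (π.q_nonneg t s' a))
      (M.p_nonneg t s' a s)

/-- every policy has an unreachable state-epoch pair iff there exist a state
`s` and an epoch `t ∈ {1,…,T-1}` (0-based; the paper's `t ∈ {2,…,T}`) such that
`p_{t-1}(s | s', a') = 0` for every state `s'` and every action `a'`. -/
theorem all_policies_have_unreachable_iff (N T : ℕ) (k : Fin N → ℕ)
    (hk : ∀ s, 1 ≤ k s) (hT : 2 ≤ T) (M : MDP N T k) :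
    (∀ π : Policy N k, ∃ s : Fin N, ∃ t : ℕ, t ≤ T - 1 ∧
        ∀ j, condProb M π j t s = 0) ↔
      (∃ s : Fin N, ∃ t : ℕ, 1 ≤ t ∧ t ≤ T - 1 ∧
        ∀ s' : Fin N, ∀ a' : Fin (k s'), M.p (t-1) s' a' s = 0) := by
  constructor
  · -- contrapositive
    intro h
    by_contra hno
    push_neg at hno
    -- build uniform policy
    have hkpos : ∀ s, (0:ℝ) < (k s : ℝ) := fun s => by
      exact_mod_cast Nat.lt_of_lt_of_le Nat.zero_lt_one (hk s)
    let π : Policy N k :=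
      { q := fun _ s _ => ((k s : ℝ))⁻¹
        q_nonneg := fun _ s _ => inv_nonneg.mpr (hkpos s).le
        q_sum := fun _ s => by
          rw [Finset.sum_const, Finset.card_univ, Fintype.card_fin, nsmul_eq_mul]
          exact mul_inv_cancel₀ (hkpos s).ne' }
    have claim : ∀ t, t ≤ T - 1 → ∀ s, ∃ j, 0 < condProb M π j t s := by
      intro t
      induction t with
      | zero =>
        intro _ s
        exact ⟨s, by simp [condProb]⟩
      | succ t ih =>
        intro ht s
        obtain ⟨s', a', hp⟩ := hno s (t+1) (Nat.succ_le_succ (Nat.zero_le t)) ht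
        obtain ⟨j, hj⟩ := ih (Nat.le_of_succ_le ht) s'
        refine ⟨j, ?_⟩
        rw [show condProb M π j (t+1) s
            = ∑ s'', ∑ a, condProb M π j t s'' * π.q t s'' a * M.p t s'' a s from rfl]
        apply Finset.sum_pos'
        · intro i _
          apply Finset.sum_nonneg
          intro a _
          exact mul_nonneg (mul_nonneg (condProb_nonneg M π j t i) (π.q_nonneg t i a))
            (M.p_nonneg t i a s)
        · refine ⟨s', Finset.mem_univ _, ?_⟩
          apply Finset.sum_pos'
          · intro a _
            exact mul_nonneg (mul_nonneg (condProb_nonneg M π j t s') (π.q_nonneg t s' a))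
              (M.p_nonneg t s' a s)
          · refine ⟨a', Finset.mem_univ _, ?_⟩
            have hp' : 0 < M.p t s' a' s := lt_of_le_of_ne (M.p_nonneg t s' a' s) (Ne.symm hp)
            exact mul_pos (mul_pos hj (inv_pos.mpr (hkpos s'))) hp'
    obtain ⟨s, t, ht, hzero⟩ := h π
    obtain ⟨j, hj⟩ := claim t ht s
    exact absurd (hzero j) hj.ne'
  · rintro ⟨s, t, ht1, ht2, hp⟩ π
    refine ⟨s, t, ht2, fun j => ?_⟩
    obtain ⟨u, rfl⟩ : ∃ u, t = u + 1 := ⟨t - 1, (Nat.succ_pred_eq_of_pos ht1).symm⟩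
    rw [show condProb M π j (u+1) s
        = ∑ s', ∑ a, condProb M π j u s' * π.q u s' a * M.p u s' a s from rfl]
    apply Finset.sum_eq_zero
    intro s' _
    apply Finset.sum_eq_zero
    intro a _
    have := hp s' a
    simp only [Nat.add_sub_cancel] at this
    rw [this, mul_zero]
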